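/- Let A be a commutative local ring. Let R be the subring of the product A[[x]] × A[[y]] of two formal power-series rings over A consisting of all pairs (f, g) whose constant coefficients agree (R is isomorphic to A[[x,y]]/(xy)), with projections pr₁ : R → A[[x]], pr₂ : R → A[[y]], and let Δ : A → R be the ring homomorphism c ↦ (c, c). Given units ā ∈ A[[x]]ˣ and b̄ ∈ A[[y]]ˣ, there exist unique units a, b ∈ Rˣ such that pr₁(a) = ā, pr₂(b) = b̄, and the product a·b lies in the image of Δ. -/

import Mathlib

/-- The local model of a node over `A`: the subring
`R = {(f, g) ∈ A[[x]] × A[[y]] | f(0) = g(0)} ≅ A[[x,y]]/(xy)`. -/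
def nodeRing (A : Type*) [CommRing A] : Subring (PowerSeries A × PowerSeries A) where
  carrier := {p | PowerSeries.constantCoeff (R := A) p.1 = PowerSeries.constantCoeff (R := A) p.2}
  zero_mem' := by simp
  one_mem' := by simp
  add_mem' := by intro a b ha hb; simpa using congrArg₂ (· + ·) ha hb
  neg_mem' := by intro a ha; simpa using congrArg (- ·) ha
  mul_mem' := by intro a b ha hb; simpa using congrArg₂ (· * ·) ha hb

/-- Let `A` be a commutative local ring and `R = A[[x]] ×_A A[[y]]` the subring of
pairs of power series with equal constant coefficient.  Given units `ā ∈ A[[x]]ˣ` and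
`b̄ ∈ A[[y]]ˣ`, there exist unique units `a, b ∈ Rˣ` with `pr₁ a = ā`, `pr₂ b = b̄`
and `a·b` in the image of the diagonal `Δ : A → R`, `c ↦ (c, c)`. -/
theorem node_unique_unit_lifts
    {A : Type*} [CommRing A] [IsLocalRing A]
    (abar : (PowerSeries A)ˣ) (bbar : (PowerSeries A)ˣ) :
    ∃! p : (nodeRing A)ˣ × (nodeRing A)ˣ,
      (((p.1 : nodeRing A) : PowerSeries A × PowerSeries A)).1 = (abar : PowerSeries A) ∧
      (((p.2 : nodeRing A) : PowerSeries A × PowerSeries A)).2 = (bbar : PowerSeries A) ∧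
      ∃ c : A, (((p.1 * p.2 : (nodeRing A)ˣ) : nodeRing A) : PowerSeries A × PowerSeries A) =
        (PowerSeries.C (R := A) c, PowerSeries.C (R := A) c) := by
  classical
  set φ : (PowerSeries A)ˣ →* Aˣ :=
    Units.map (PowerSeries.constantCoeff (R := A)).toMonoidHom with hφ
  set α : Aˣ := φ abar with hα
  set β : Aˣ := φ bbar with hβ
  set c : Aˣ := α * β with hc
  have hαv : PowerSeries.constantCoeff (R := A) (abar : PowerSeries A) = (α : A) := rfl
  have hβv : PowerSeries.constantCoeff (R := A) (bbar : PowerSeries A) = (β : A) := rfl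
  have hαi : PowerSeries.constantCoeff (R := A) ((abar⁻¹ : (PowerSeries A)ˣ) : PowerSeries A)
      = ((α⁻¹ : Aˣ) : A) := by
    have : φ abar⁻¹ = α⁻¹ := by rw [map_inv, hα]
    exact congrArg Units.val this
  have hβi : PowerSeries.constantCoeff (R := A) ((bbar⁻¹ : (PowerSeries A)ˣ) : PowerSeries A)
      = ((β⁻¹ : Aˣ) : A) := by
    have : φ bbar⁻¹ = β⁻¹ := by rw [map_inv, hβ]
    exact congrArg Units.val this
  have hCmul : ∀ x y : A, PowerSeries.C (R := A) x * PowerSeries.C (R := A) y = PowerSeries.C (R := A) (x * y) :=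
    fun x y => (map_mul _ _ _).symm
  -- the unit a = (abar, bbar⁻¹ * C c)
  have memA : ((abar : PowerSeries A),
      ((bbar⁻¹ : (PowerSeries A)ˣ) : PowerSeries A) * PowerSeries.C (R := A) (c : A)) ∈ nodeRing A := by
    show PowerSeries.constantCoeff (R := A) _ = PowerSeries.constantCoeff (R := A) _
    rw [map_mul, hβi, PowerSeries.constantCoeff_C, hαv, hc]
    rw [Units.val_mul, mul_comm (α : A) (β : A), ← mul_assoc, Units.inv_mul, one_mul]
  have memAi : (((abar⁻¹ : (PowerSeries A)ˣ) : PowerSeries A),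
      ((bbar : (PowerSeries A)ˣ) : PowerSeries A) * PowerSeries.C (R := A) ((c⁻¹ : Aˣ) : A)) ∈ nodeRing A := by
    show PowerSeries.constantCoeff (R := A) _ = PowerSeries.constantCoeff (R := A) _
    rw [map_mul, hβv, PowerSeries.constantCoeff_C, hαi, hc, mul_inv, Units.val_mul,
      mul_comm ((α⁻¹ : Aˣ) : A) ((β⁻¹ : Aˣ) : A), ← mul_assoc, Units.mul_inv, one_mul]
  have memB : (((abar⁻¹ : (PowerSeries A)ˣ) : PowerSeries A) * PowerSeries.C (R := A) (c : A),
      (bbar : PowerSeries A)) ∈ nodeRing A := by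
    show PowerSeries.constantCoeff (R := A) _ = PowerSeries.constantCoeff (R := A) _
    rw [map_mul, hαi, PowerSeries.constantCoeff_C, hβv, hc]
    rw [Units.val_mul, ← mul_assoc, Units.inv_mul, one_mul]
  have memBi : (((abar : (PowerSeries A)ˣ) : PowerSeries A) * PowerSeries.C (R := A) ((c⁻¹ : Aˣ) : A),
      ((bbar⁻¹ : (PowerSeries A)ˣ) : PowerSeries A)) ∈ nodeRing A := by
    show PowerSeries.constantCoeff (R := A) _ = PowerSeries.constantCoeff (R := A) _
    rw [map_mul, hαv, PowerSeries.constantCoeff_C, hβi, hc, mul_inv, Units.val_mul,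
      ← mul_assoc, Units.mul_inv, one_mul]
  have hCc : PowerSeries.C (R := A) (c : A) * PowerSeries.C (R := A) ((c⁻¹ : Aˣ) : A) = 1 := by
    rw [hCmul, Units.mul_inv, map_one]
  let aU : (nodeRing A)ˣ :=
    { val := ⟨_, memA⟩
      inv := ⟨_, memAi⟩
      val_inv := by
        apply Subtype.ext
        show (_ * _ : PowerSeries A × PowerSeries A) = 1
        apply Prod.ext
        · show (abar : PowerSeries A) * _ = 1
          exact abar.mul_inv
        · show (((bbar⁻¹ : (PowerSeries A)ˣ) : PowerSeries A) * PowerSeries.C (R := A) (c : A)) *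
            (((bbar : (PowerSeries A)ˣ) : PowerSeries A) * PowerSeries.C (R := A) ((c⁻¹ : Aˣ) : A)) = 1
          calc ((bbar⁻¹ : (PowerSeries A)ˣ) * PowerSeries.C (R := A) (c : A)) *
              ((bbar : (PowerSeries A)ˣ) * PowerSeries.C (R := A) ((c⁻¹ : Aˣ) : A))
              = (((bbar⁻¹ : (PowerSeries A)ˣ) : PowerSeries A) * bbar) *
                (PowerSeries.C (R := A) (c : A) * PowerSeries.C (R := A) ((c⁻¹ : Aˣ) : A)) := by ring
            _ = 1 := by rw [bbar.inv_mul, hCc, one_mul]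
      inv_val := by
        apply Subtype.ext
        show (_ * _ : PowerSeries A × PowerSeries A) = 1
        apply Prod.ext
        · exact abar.inv_mul
        · show (((bbar : (PowerSeries A)ˣ) : PowerSeries A) * PowerSeries.C (R := A) ((c⁻¹ : Aˣ) : A)) *
            (((bbar⁻¹ : (PowerSeries A)ˣ) : PowerSeries A) * PowerSeries.C (R := A) (c : A)) = 1
          calc ((bbar : (PowerSeries A)ˣ) * PowerSeries.C (R := A) ((c⁻¹ : Aˣ) : A)) *
              (((bbar⁻¹ : (PowerSeries A)ˣ) : PowerSeries A) * PowerSeries.C (R := A) (c : A))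
              = (((bbar : (PowerSeries A)ˣ) : PowerSeries A) * bbar⁻¹) *
                (PowerSeries.C (R := A) (c : A) * PowerSeries.C (R := A) ((c⁻¹ : Aˣ) : A)) := by ring
            _ = 1 := by rw [bbar.mul_inv, hCc, one_mul] }
  let bU : (nodeRing A)ˣ :=
    { val := ⟨_, memB⟩
      inv := ⟨_, memBi⟩
      val_inv := by
        apply Subtype.ext
        show (_ * _ : PowerSeries A × PowerSeries A) = 1
        apply Prod.ext
        · show (((abar⁻¹ : (PowerSeries A)ˣ) : PowerSeries A) * PowerSeries.C (R := A) (c : A)) *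
            (((abar : (PowerSeries A)ˣ) : PowerSeries A) * PowerSeries.C (R := A) ((c⁻¹ : Aˣ) : A)) = 1
          calc ((abar⁻¹ : (PowerSeries A)ˣ) * PowerSeries.C (R := A) (c : A)) *
              (((abar : (PowerSeries A)ˣ) : PowerSeries A) * PowerSeries.C (R := A) ((c⁻¹ : Aˣ) : A))
              = (((abar⁻¹ : (PowerSeries A)ˣ) : PowerSeries A) * abar) *
                (PowerSeries.C (R := A) (c : A) * PowerSeries.C (R := A) ((c⁻¹ : Aˣ) : A)) := by ring
            _ = 1 := by rw [abar.inv_mul, hCc, one_mul]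
        · exact bbar.mul_inv
      inv_val := by
        apply Subtype.ext
        show (_ * _ : PowerSeries A × PowerSeries A) = 1
        apply Prod.ext
        · show (((abar : (PowerSeries A)ˣ) : PowerSeries A) * PowerSeries.C (R := A) ((c⁻¹ : Aˣ) : A)) *
            (((abar⁻¹ : (PowerSeries A)ˣ) : PowerSeries A) * PowerSeries.C (R := A) (c : A)) = 1
          calc ((abar : (PowerSeries A)ˣ) * PowerSeries.C (R := A) ((c⁻¹ : Aˣ) : A)) *
              (((abar⁻¹ : (PowerSeries A)ˣ) : PowerSeries A) * PowerSeries.C (R := A) (c : A))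
              = (((abar : (PowerSeries A)ˣ) : PowerSeries A) * abar⁻¹) *
                (PowerSeries.C (R := A) (c : A) * PowerSeries.C (R := A) ((c⁻¹ : Aˣ) : A)) := by ring
            _ = 1 := by rw [abar.mul_inv, hCc, one_mul]
        · exact bbar.inv_mul }
  refine ⟨(aU, bU), ⟨rfl, rfl, (c : A), ?_⟩, ?_⟩
  · show ((_ : PowerSeries A × PowerSeries A) * _) = _
    apply Prod.ext
    · show (abar : PowerSeries A) * (((abar⁻¹ : (PowerSeries A)ˣ) : PowerSeries A) *
        PowerSeries.C (R := A) (c : A)) = PowerSeries.C (R := A) (c : A)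
      rw [← mul_assoc, abar.mul_inv, one_mul]
    · show (((bbar⁻¹ : (PowerSeries A)ˣ) : PowerSeries A) * PowerSeries.C (R := A) (c : A)) *
        (bbar : PowerSeries A) = PowerSeries.C (R := A) (c : A)
      rw [mul_comm, ← mul_assoc, bbar.mul_inv, one_mul]
  · rintro ⟨qa, qb⟩ ⟨h1, h2, c', hc'⟩
    have h1' : (((qa : nodeRing A) : PowerSeries A × PowerSeries A)).1
        = (abar : PowerSeries A) := h1
    have h2' : (((qb : nodeRing A) : PowerSeries A × PowerSeries A)).2
        = (bbar : PowerSeries A) := h2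
    -- component equations
    have e1 : (abar : PowerSeries A) * (((qb : nodeRing A) : PowerSeries A × PowerSeries A)).1
        = PowerSeries.C (R := A) c' := by
      have t := congrArg Prod.fst hc'
      simp only [] at t
      have t' : (((qa : nodeRing A) : PowerSeries A × PowerSeries A)).1 *
          (((qb : nodeRing A) : PowerSeries A × PowerSeries A)).1 = PowerSeries.C (R := A) c' := by
        simpa using t
      rw [h1'] at t'
      exact t'
    have e2 : (((qa : nodeRing A) : PowerSeries A × PowerSeries A)).2 * (bbar : PowerSeries A)
        = PowerSeries.C (R := A) c' := by
      have t := congrArg Prod.snd hc'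
      have t' : (((qa : nodeRing A) : PowerSeries A × PowerSeries A)).2 *
          (((qb : nodeRing A) : PowerSeries A × PowerSeries A)).2 = PowerSeries.C (R := A) c' := by
        simpa using t
      rw [h2'] at t'
      exact t'
    have hqbmem : PowerSeries.constantCoeff (R := A) (((qb : nodeRing A) : PowerSeries A × PowerSeries A)).1
        = PowerSeries.constantCoeff (R := A) (((qb : nodeRing A) : PowerSeries A × PowerSeries A)).2 :=
      (qb : nodeRing A).2
    have hc' : c' = (c : A) := by
      have := congrArg (PowerSeries.constantCoeff (R := A)) e1
      rw [map_mul, hαv, PowerSeries.constantCoeff_C, hqbmem, h2', hβv] at this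
      rw [← this, hc, Units.val_mul]
    have hqb1 : (((qb : nodeRing A) : PowerSeries A × PowerSeries A)).1
        = ((abar⁻¹ : (PowerSeries A)ˣ) : PowerSeries A) * PowerSeries.C (R := A) (c : A) := by
      have h := (Units.eq_inv_mul_iff_mul_eq abar).mpr e1
      rw [hc'] at h
      exact h
    have hqa2 : (((qa : nodeRing A) : PowerSeries A × PowerSeries A)).2
        = ((bbar⁻¹ : (PowerSeries A)ˣ) : PowerSeries A) * PowerSeries.C (R := A) (c : A) := by
      have h := (Units.eq_mul_inv_iff_mul_eq bbar).mpr e2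
      rw [hc'] at h
      rw [h, mul_comm]
    apply Prod.ext
    · apply Units.ext
      apply Subtype.ext
      apply Prod.ext
      · exact h1
      · exact hqa2
    · apply Units.ext
      apply Subtype.ext
      apply Prod.ext
      · exact hqb1
      · exact h2
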